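/- arXiv:1901.07746 — 2 statements merged into one kernel-verified Lean document; each statement's English description precedes it below -/
import Mathlib

section
/- Let A₁, ..., A_l be p×p Hermitian matrices with all eigenvalues of A_j bounded in absolute value by M_j. Then |tr(A₁ ∘ ⋯ ∘ A_l)| ≤ min{rank(A₁),...,rank(A_l)} · M₁ ⋯ M_l, where ∘ denotes the Hadamard (entrywise) product. -/
open Matrix

private lemma foldr_hadamard_apply {p : ℕ} (L : List (Matrix (Fin p) (Fin p) ℂ)) (i k : Fin p) :
    (L.foldr Matrix.hadamard (Matrix.of fun _ _ => (1 : ℂ))) i k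
      = (L.map fun B => B i k).prod := by
  induction L with
  | nil => simp
  | cons B L ih => simp [Matrix.hadamard_apply, ih]

private lemma unitary_row_norm {p : ℕ} (U : Matrix.unitaryGroup (Fin p) ℂ) (i : Fin p) :
    ∑ k, Complex.normSq ((U : Matrix (Fin p) (Fin p) ℂ) i k) = 1 := by
  have h := Matrix.mem_unitaryGroup_iff.mp U.2
  have h2 := congrFun (congrFun h i) i
  simp only [Matrix.mul_apply, Matrix.one_apply_eq, Matrix.star_apply, RCLike.star_def] at h2
  have : ((∑ k, Complex.normSq ((U : Matrix (Fin p) (Fin p) ℂ) i k) : ℝ) : ℂ) = 1 := by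
    push_cast
    rw [← h2]
    exact Finset.sum_congr rfl fun k _ => (Complex.mul_conj _).symm
  exact_mod_cast this

private lemma unitary_col_norm {p : ℕ} (U : Matrix.unitaryGroup (Fin p) ℂ) (k : Fin p) :
    ∑ i, Complex.normSq ((U : Matrix (Fin p) (Fin p) ℂ) i k) = 1 := by
  have h := Matrix.mem_unitaryGroup_iff'.mp U.2
  have h2 := congrFun (congrFun h k) k
  simp only [Matrix.mul_apply, Matrix.one_apply_eq, Matrix.star_apply, RCLike.star_def] at h2
  have : ((∑ i, Complex.normSq ((U : Matrix (Fin p) (Fin p) ℂ) i k) : ℝ) : ℂ) = 1 := by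
    push_cast
    rw [← h2]
    exact Finset.sum_congr rfl fun i _ => Complex.normSq_eq_conj_mul_self
  exact_mod_cast this

private lemma herm_diag_eq {p : ℕ} {A : Matrix (Fin p) (Fin p) ℂ} (hA : A.IsHermitian)
    (i : Fin p) :
    A i i = ∑ k, (hA.eigenvalues k : ℂ) *
      (Complex.normSq ((hA.eigenvectorUnitary : Matrix (Fin p) (Fin p) ℂ) i k) : ℂ) := by
  conv_lhs => rw [hA.spectral_theorem, Unitary.conjStarAlgAut_apply]
  rw [Matrix.mul_apply]
  simp only [Matrix.mul_diagonal, Matrix.star_apply, RCLike.star_def, Function.comp_apply]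
  refine Finset.sum_congr rfl fun k _ => ?_
  have : (Complex.normSq ((hA.eigenvectorUnitary : Matrix (Fin p) (Fin p) ℂ) i k) : ℂ)
      = (hA.eigenvectorUnitary : Matrix (Fin p) (Fin p) ℂ) i k *
        (starRingEnd ℂ) ((hA.eigenvectorUnitary : Matrix (Fin p) (Fin p) ℂ) i k) :=
    (Complex.mul_conj _).symm
  rw [this, mul_assoc]; exact mul_left_comm _ _ _

private lemma herm_diag_bound {p : ℕ} {A : Matrix (Fin p) (Fin p) ℂ} (hA : A.IsHermitian)
    {M : ℝ} (hM : ∀ i, |hA.eigenvalues i| ≤ M) (i : Fin p) :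
    ‖A i i‖ ≤ M := by
  rw [herm_diag_eq hA i]
  calc ‖(∑ k, (hA.eigenvalues k : ℂ) *
        (Complex.normSq ((hA.eigenvectorUnitary : Matrix (Fin p) (Fin p) ℂ) i k) : ℂ))‖
      ≤ ∑ k, ‖((hA.eigenvalues k : ℂ) *
        (Complex.normSq ((hA.eigenvectorUnitary : Matrix (Fin p) (Fin p) ℂ) i k) : ℂ))‖ := by
        exact norm_sum_le _ _
    _ ≤ ∑ k, M * Complex.normSq ((hA.eigenvectorUnitary : Matrix (Fin p) (Fin p) ℂ) i k) := by
        refine Finset.sum_le_sum fun k _ => ?_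
        rw [norm_mul, Complex.norm_real, Complex.norm_real, Real.norm_eq_abs, Real.norm_eq_abs,
          abs_of_nonneg (Complex.normSq_nonneg _)]
        exact mul_le_mul_of_nonneg_right (hM k) (Complex.normSq_nonneg _)
    _ = M := by rw [← Finset.mul_sum, unitary_row_norm, mul_one]

/-- Hadamard product trace bound: if `A₁,...,A_l` are p×p Hermitian matrices whose
eigenvalues are bounded in absolute value by `M₁,...,M_l`, then
`|tr(A₁ ∘ ⋯ ∘ A_l)| ≤ min_j rank(A_j) · M₁ ⋯ M_l`. -/
theorem trace_hadamard_prod_le {p l : ℕ} (hl : 0 < l)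
    (A : Fin l → Matrix (Fin p) (Fin p) ℂ)
    (hA : ∀ j, (A j).IsHermitian)
    (M : Fin l → ℝ)
    (hM : ∀ j i, |(hA j).eigenvalues i| ≤ M j) :
    ‖((List.ofFn A).foldr Matrix.hadamard
        (Matrix.of fun _ _ => (1 : ℂ))).trace‖ ≤
      (Finset.univ.inf' ⟨⟨0, hl⟩, Finset.mem_univ _⟩ (fun j => (A j).rank) : ℝ) *
        ∏ j, M j := by
  classical
  obtain ⟨j0, -, hj0⟩ := Finset.exists_mem_eq_inf' (s := (Finset.univ : Finset (Fin l)))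
    ⟨⟨0, hl⟩, Finset.mem_univ _⟩ (fun j => ((A j).rank : ℝ))
  rw [hj0]
  have htr : ((List.ofFn A).foldr Matrix.hadamard
      (Matrix.of fun _ _ => (1 : ℂ))).trace = ∑ i, ∏ j, A j i i := by
    unfold Matrix.trace
    refine Finset.sum_congr rfl fun i _ => ?_
    rw [Matrix.diag_apply, foldr_hadamard_apply, List.map_ofFn, List.prod_ofFn]
    rfl
  rcases Nat.eq_zero_or_pos p with hp | hp
  · subst hp
    have : (A j0).rank = 0 := Nat.le_zero.mp ((A j0).rank_le_card_width.trans (by simp))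
    simp [htr, this]
  -- main case
  have hM0 : ∀ j, 0 ≤ M j := fun j => (abs_nonneg _).trans (hM j ⟨0, hp⟩)
  set U : Matrix (Fin p) (Fin p) ℂ := ((hA j0).eigenvectorUnitary : Matrix (Fin p) (Fin p) ℂ)
    with hUdef
  set lam := (hA j0).eigenvalues with hlam
  set d : Fin p → ℂ := fun i => ∏ j ∈ Finset.univ.erase j0, A j i i with hd
  set P : ℝ := ∏ j ∈ Finset.univ.erase j0, M j with hP
  have hPnn : 0 ≤ P := Finset.prod_nonneg fun j _ => hM0 j
  have hdb : ∀ i, ‖d i‖ ≤ P := by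
    intro i
    rw [hd, hP]
    simp only [norm_prod]
    exact Finset.prod_le_prod (fun j _ => norm_nonneg _)
      (fun j _ => herm_diag_bound (hA j) (hM j) i)
  set c : Fin p → ℂ := fun k => ∑ i, (Complex.normSq (U i k) : ℂ) * d i with hc
  have htr2 : (∑ i, ∏ j, A j i i) = ∑ k, (lam k : ℂ) * c k := by
    have h1 : ∀ i, (∏ j, A j i i) = A j0 i i * d i := fun i =>
      (Finset.mul_prod_erase Finset.univ (fun j => A j i i) (Finset.mem_univ j0)).symm
    have h2 : ∀ i, A j0 i i * d i
        = ∑ k, (lam k : ℂ) * ((Complex.normSq (U i k) : ℂ) * d i) := by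
      intro i
      rw [herm_diag_eq (hA j0) i, Finset.sum_mul]
      exact Finset.sum_congr rfl fun k _ => mul_assoc _ _ _
    simp only [h1, h2]
    rw [Finset.sum_comm]
    exact Finset.sum_congr rfl fun k _ => (Finset.mul_sum _ _ _).symm
  have hck : ∀ k, ‖c k‖ ≤ P := by
    intro k
    rw [hc]
    calc ‖∑ i, (Complex.normSq (U i k) : ℂ) * d i‖
        ≤ ∑ i, ‖(Complex.normSq (U i k) : ℂ) * d i‖ := norm_sum_le _ _
      _ ≤ ∑ i, Complex.normSq (U i k) * P := by
          refine Finset.sum_le_sum fun i _ => ?_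
          rw [norm_mul, Complex.norm_real, Real.norm_eq_abs, abs_of_nonneg (Complex.normSq_nonneg _)]
          exact mul_le_mul_of_nonneg_left (hdb i) (Complex.normSq_nonneg _)
      _ = P := by rw [← Finset.sum_mul, unitary_col_norm, one_mul]
  have hcard : (Finset.univ.filter fun k => lam k ≠ 0).card = (A j0).rank := by
    rw [(hA j0).rank_eq_card_non_zero_eigs, Fintype.card_subtype]
  rw [htr, htr2]
  calc ‖∑ k, (lam k : ℂ) * c k‖
      ≤ ∑ k, ‖(lam k : ℂ) * c k‖ := norm_sum_le _ _
    _ = ∑ k ∈ Finset.univ.filter (fun k => lam k ≠ 0), ‖(lam k : ℂ) * c k‖ := by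
        refine (Finset.sum_filter_of_ne fun k _ h => ?_).symm
        intro h0
        exact h (by rw [h0]; simp)
    _ ≤ ∑ _k ∈ Finset.univ.filter (fun k => lam k ≠ 0), M j0 * P := by
        refine Finset.sum_le_sum fun k _ => ?_
        rw [norm_mul, Complex.norm_real, Real.norm_eq_abs]
        exact mul_le_mul (hM j0 k) (hck k) (norm_nonneg _) (hM0 j0)
    _ = ((A j0).rank : ℝ) * (M j0 * P) := by rw [Finset.sum_const, nsmul_eq_mul, hcard]
    _ = ((A j0).rank : ℝ) * ∏ j, M j := by
        rw [hP, Finset.mul_prod_erase Finset.univ M (Finset.mem_univ j0)]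
end

section
/- Let A = (a_{jk}) be an n×n Hermitian matrix with eigenvalues λ₁,...,λ_n, and let f : ℝ → ℝ be convex. Then Σ_{j=1}^n f(a_{jj}) ≤ Σ_{j=1}^n f(λ_j). -/
open Matrix

lemma aux_mul_star_re (z : ℂ) (r : ℝ) :
    (z * (r : ℂ) * star z).re = Complex.normSq z * r := by
  have h : z * (r : ℂ) * star z = ((Complex.normSq z * r : ℝ) : ℂ) := by
    rw [Complex.star_def, mul_right_comm, Complex.mul_conj]
    push_cast; ring
  rw [h, Complex.ofReal_re]

lemma aux_mul_star_eq (z : ℂ) : z * star z = ((Complex.normSq z : ℝ) : ℂ) := by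
  rw [Complex.star_def, Complex.mul_conj]

/-- Schur majorization: for an n×n Hermitian matrix `A` with eigenvalues `λ₁,...,λ_n`
and a convex function `f : ℝ → ℝ`, `Σ_j f(a_{jj}) ≤ Σ_j f(λ_j)`. -/
theorem sum_convex_diag_le_sum_convex_eigenvalues {n : ℕ}
    (A : Matrix (Fin n) (Fin n) ℂ) (hA : A.IsHermitian)
    (f : ℝ → ℝ) (hf : ConvexOn ℝ Set.univ f) :
    ∑ j, f ((A j j).re) ≤ ∑ j, f (hA.eigenvalues j) := by
  set U : Matrix (Fin n) (Fin n) ℂ := (hA.eigenvectorUnitary : Matrix (Fin n) (Fin n) ℂ) with hU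
  set w : Fin n → Fin n → ℝ := fun j i => Complex.normSq (U j i) with hw
  -- diagonal entry as convex combination of eigenvalues
  have hdiag : ∀ j, (A j j).re = ∑ i, w j i * hA.eigenvalues i := by
    intro j
    conv_lhs => rw [hA.spectral_theorem, Unitary.conjStarAlgAut_apply]
    rw [Matrix.mul_apply, Complex.re_sum]
    congr 1; ext i
    rw [Matrix.mul_apply, Finset.sum_mul, Complex.re_sum]
    rw [Finset.sum_eq_single i]
    · simp only [diagonal_apply_eq, Function.comp_apply, Matrix.star_apply]
      exact aux_mul_star_re _ _
    · intro b _ hb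
      simp [Matrix.diagonal_apply_ne _ hb]
    · simp
  -- rows sum to 1
  have hrow : ∀ j, ∑ i, w j i = 1 := by
    intro j
    have h := Matrix.mem_unitaryGroup_iff.mp hA.eigenvectorUnitary.2
    have h2 := congrArg (fun M => M j j) h
    simp only [Matrix.mul_apply, Matrix.one_apply_eq, Matrix.star_apply] at h2
    have : ((∑ i, w j i : ℝ) : ℂ) = 1 := by
      rw [← h2]; push_cast [hw]
      exact Finset.sum_congr rfl fun i _ => (aux_mul_star_eq _).symm
    exact_mod_cast this
  -- columns sum to 1
  have hcol : ∀ i, ∑ j, w j i = 1 := by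
    intro i
    have h := Matrix.mem_unitaryGroup_iff'.mp hA.eigenvectorUnitary.2
    have h2 := congrArg (fun M => M i i) h
    simp only [Matrix.mul_apply, Matrix.one_apply_eq, Matrix.star_apply] at h2
    have : ((∑ j, w j i : ℝ) : ℂ) = 1 := by
      rw [← h2]; push_cast [hw]
      exact Finset.sum_congr rfl fun j _ => by rw [mul_comm]; exact (aux_mul_star_eq _).symm
    exact_mod_cast this
  calc ∑ j, f ((A j j).re)
      ≤ ∑ j, ∑ i, w j i * f (hA.eigenvalues i) := by
        apply Finset.sum_le_sum
        intro j _
        rw [hdiag j]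
        have := hf.map_sum_le (t := Finset.univ) (w := w j) (p := hA.eigenvalues)
          (fun i _ => Complex.normSq_nonneg _) (hrow j) (fun i _ => trivial)
        simpa using this
    _ = ∑ i, f (hA.eigenvalues i) := by
        rw [Finset.sum_comm]
        exact Finset.sum_congr rfl fun i _ => by rw [← Finset.sum_mul, hcol i, one_mul]
end
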